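/- Let F be a field, d >= 1, and work in the free associative F-algebra on 2d generators y_1,...,y_d, z_1,...,z_d. Let HARD_d be the noncommutative polynomial that is the sum, over all subsets S of {1,...,d}, of the word formed by the product of the y_i for i in S in increasing order of i, followed by the product of the z_j for j in the complement of S in increasing order of j. Then the sum over k = 0,...,d of the ranks over F of the matrices M_k(HARD_d) is at least 2^d. -/

import Mathlib

/-- The coefficient of a noncommutative polynomial (element of the free associative algebra)
at a word, via the identification with the monoid algebra of the free monoid. -/
noncomputable def ncCoeff {F : Type*} [CommSemiring F] {X : Type*}
    (x : FreeAlgebra F X) (w : FreeMonoid X) : F :=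
  (FreeAlgebra.equivMonoidAlgebraFreeMonoid x).coeff w

/-- Nisan's hard polynomial `HARD_d`: the ordered representative of `∏ i, (y_i + z_i)`,
i.e. the sum over all subsets `S ⊆ {1,…,d}` of the product of the `y_i, i ∈ S` in
increasing order followed by the product of the `z_j, j ∈ Sᶜ` in increasing order
(with `y` the left copy and `z` the right copy of `Fin d`). -/
noncomputable def HARD (F : Type*) [Field F] (d : ℕ) : FreeAlgebra F (Fin d ⊕ Fin d) :=
  ∑ S : Finset (Fin d),
    ((S.sort (· ≤ ·)).map (fun i => FreeAlgebra.ι F (Sum.inl i : Fin d ⊕ Fin d))).prod *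
      ((Sᶜ.sort (· ≤ ·)).map (fun j => FreeAlgebra.ι F (Sum.inr j : Fin d ⊕ Fin d))).prod

/-- Nisan's partial derivatives matrix `M_k(HARD_d)`: rows indexed by words of length `k`
over the `2d` generators, columns by words of length `d - k`, with `(u,v)` entry the
coefficient of the concatenated word `u * v` in `HARD_d`. -/
noncomputable def nisanMatrix (F : Type*) [Field F] (d k : ℕ) :
    Matrix (List.Vector (Fin d ⊕ Fin d) k) (List.Vector (Fin d ⊕ Fin d) (d - k)) F :=
  fun u v => ncCoeff (HARD F d) (FreeMonoid.ofList u.toList * FreeMonoid.ofList v.toList)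

/- ---------- Auxiliary lemmas ---------- -/

lemma nisan_equiv_iota {F X : Type*} [CommSemiring F] (x : X) :
    FreeAlgebra.equivMonoidAlgebraFreeMonoid (FreeAlgebra.ι F x) =
      MonoidAlgebra.single (FreeMonoid.of x) 1 := by
  simp [FreeAlgebra.equivMonoidAlgebraFreeMonoid]

lemma nisan_equiv_listprod {F X : Type*} [CommSemiring F] (l : List X) :
    FreeAlgebra.equivMonoidAlgebraFreeMonoid ((l.map (FreeAlgebra.ι F)).prod) =
      MonoidAlgebra.single (FreeMonoid.ofList l) 1 := by
  induction l with
  | nil => simp [MonoidAlgebra.one_def, FreeMonoid.ofList_nil]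
  | cons x l ih =>
    simp only [List.map_cons, List.prod_cons, map_mul, ih, nisan_equiv_iota,
      MonoidAlgebra.single_mul_single, one_mul, FreeMonoid.ofList_cons]

lemma nisan_filterMap_none {α β : Type*} (l : List α) :
    l.filterMap (fun _ => (none : Option β)) = [] := by
  induction l with
  | nil => rfl
  | cons a l ih => simpa using ih

lemma nisan_word_eq_iff {d : ℕ} (S T A C : Finset (Fin d)) :
    (S.sort (· ≤ ·)).map Sum.inl ++ (T.sort (· ≤ ·)).map (Sum.inr : Fin d → Fin d ⊕ Fin d)
      = (A.sort (· ≤ ·)).map Sum.inl ++ (C.sort (· ≤ ·)).map Sum.inr ↔ S = A ∧ T = C := by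
  constructor
  · intro h
    have hL := congrArg (List.filterMap (Sum.getLeft? : Fin d ⊕ Fin d → Option (Fin d))) h
    have hR := congrArg (List.filterMap (Sum.getRight? : Fin d ⊕ Fin d → Option (Fin d))) h
    simp only [List.filterMap_append, List.filterMap_map, Function.comp_def,
      Sum.getLeft?_inl, Sum.getLeft?_inr, Sum.getRight?_inl, Sum.getRight?_inr,
      List.filterMap_some, nisan_filterMap_none, List.append_nil, List.nil_append] at hL hR
    constructor
    · have := congrArg List.toFinset hL; simpa [Finset.sort_toFinset] using this
    · have := congrArg List.toFinset hR; simpa [Finset.sort_toFinset] using this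
  · rintro ⟨rfl, rfl⟩; rfl

lemma nisan_ncCoeff_HARD {F : Type*} [Field F] {d : ℕ} (A C : Finset (Fin d)) :
    ncCoeff (HARD F d)
      (FreeMonoid.ofList ((A.sort (· ≤ ·)).map Sum.inl ++ (C.sort (· ≤ ·)).map Sum.inr))
      = if Aᶜ = C then 1 else 0 := by
  classical
  have hterm : ∀ S : Finset (Fin d),
      FreeAlgebra.equivMonoidAlgebraFreeMonoid
        (((S.sort (· ≤ ·)).map (fun i => FreeAlgebra.ι F (Sum.inl i : Fin d ⊕ Fin d))).prod *
          ((Sᶜ.sort (· ≤ ·)).map (fun j => FreeAlgebra.ι F (Sum.inr j : Fin d ⊕ Fin d))).prod)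
      = MonoidAlgebra.single
          (FreeMonoid.ofList
            ((S.sort (· ≤ ·)).map Sum.inl ++ (Sᶜ.sort (· ≤ ·)).map Sum.inr)) 1 := by
    intro S
    have h1 : ((S.sort (· ≤ ·)).map (fun i => FreeAlgebra.ι F (Sum.inl i : Fin d ⊕ Fin d)))
        = (((S.sort (· ≤ ·)).map Sum.inl).map (FreeAlgebra.ι F)) := by
      rw [List.map_map]; rfl
    have h2 : ((Sᶜ.sort (· ≤ ·)).map (fun j => FreeAlgebra.ι F (Sum.inr j : Fin d ⊕ Fin d)))
        = (((Sᶜ.sort (· ≤ ·)).map Sum.inr).map (FreeAlgebra.ι F)) := by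
      rw [List.map_map]; rfl
    rw [h1, h2, ← List.prod_append, ← List.map_append, nisan_equiv_listprod]
  unfold ncCoeff HARD
  rw [map_sum]
  rw [MonoidAlgebra.coeff_sum, Finsupp.finset_sum_apply]
  have hcond : ∀ S : Finset (Fin d),
      (FreeAlgebra.equivMonoidAlgebraFreeMonoid
        (((S.sort (· ≤ ·)).map (fun i => FreeAlgebra.ι F (Sum.inl i : Fin d ⊕ Fin d))).prod *
          ((Sᶜ.sort (· ≤ ·)).map (fun j => FreeAlgebra.ι F (Sum.inr j : Fin d ⊕ Fin d))).prod)).coeff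
        (FreeMonoid.ofList ((A.sort (· ≤ ·)).map Sum.inl ++ (C.sort (· ≤ ·)).map Sum.inr))
      = if S = A ∧ Aᶜ = C then 1 else 0 := by
    intro S
    rw [hterm S, MonoidAlgebra.coeff_single, Finsupp.single_apply]
    congr 1
    rw [eq_iff_iff, FreeMonoid.ofList.apply_eq_iff_eq, nisan_word_eq_iff]
    constructor
    · rintro ⟨rfl, rfl⟩; exact ⟨rfl, rfl⟩
    · rintro ⟨rfl, rfl⟩; exact ⟨rfl, rfl⟩
  rw [Finset.sum_congr rfl (fun S _ => hcond S)]
  by_cases h : Aᶜ = C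
  · simp [h, Finset.sum_ite_eq']
  · simp [h]

lemma nisan_rank_ge_of_submatrix_eq_one {F : Type*} [Field F] {m n ι : Type*}
    [Fintype m] [Fintype n] [Fintype ι] [DecidableEq ι] [DecidableEq m] [DecidableEq n]
    (M : Matrix m n F) (r : ι → m) (c : ι → n)
    (h : M.submatrix r c = 1) : Fintype.card ι ≤ M.rank := by
  have key : M.submatrix r c =
      (Matrix.of fun i u => if u = r i then (1 : F) else 0) * M *
      (Matrix.of fun v j => if v = c j then (1 : F) else 0) := by
    ext i j
    simp [Matrix.mul_apply, Finset.sum_ite_eq, Finset.sum_ite_eq']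
  have h1 : (M.submatrix r c).rank ≤ M.rank := by
    rw [key]
    exact le_trans (Matrix.rank_mul_le_left _ _) (Matrix.rank_mul_le_right _ _)
  rwa [h, Matrix.rank_one] at h1

lemma nisan_rank_lb {F : Type*} [Field F] {d k : ℕ} (hk : k ≤ d) :
    d.choose k ≤ (nisanMatrix F d k).rank := by
  classical
  set ι := {A : Finset (Fin d) // A.card = k}
  have hr : ∀ A : ι, ((A.1.sort (· ≤ ·)).map (Sum.inl : Fin d → Fin d ⊕ Fin d)).length = k := by
    intro A; simp [A.2]
  have hc : ∀ A : ι,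
      ((A.1ᶜ.sort (· ≤ ·)).map (Sum.inr : Fin d → Fin d ⊕ Fin d)).length = d - k := by
    intro A; simp [Finset.card_compl, A.2]
  have key := nisan_rank_ge_of_submatrix_eq_one (nisanMatrix F d k)
    (fun A : ι => (⟨_, hr A⟩ : List.Vector (Fin d ⊕ Fin d) k))
    (fun A : ι => (⟨_, hc A⟩ : List.Vector (Fin d ⊕ Fin d) (d - k)))
    (by
      ext A B
      show ncCoeff (HARD F d)
        (FreeMonoid.ofList
          ((A.1.sort (· ≤ ·)).map Sum.inl ++ (B.1ᶜ.sort (· ≤ ·)).map Sum.inr)) = _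
      rw [nisan_ncCoeff_HARD, Matrix.one_apply]
      by_cases h : A = B
      · simp [h]
      · rw [if_neg (fun hc => h (Subtype.ext (compl_inj_iff.mp hc))), if_neg h])
  calc d.choose k = Fintype.card ι := by
        rw [Fintype.card_finset_len, Fintype.card_fin]
    _ ≤ (nisanMatrix F d k).rank := key

/-- The sum over `k = 0,…,d` of the ranks of Nisan's matrices `M_k(HARD_d)` is at least
`2^d` (whence, by Nisan's theorem, every noncommutative formula computing `HARD_d` — in
particular every ordered formula computing `∏ i, (y_i + z_i)` — has size at least `2^d`). -/
theorem sum_nisanMatrix_rank_ge (F : Type*) [Field F] (d : ℕ) (hd : 1 ≤ d) :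
    2 ^ d ≤ ∑ k ∈ Finset.range (d + 1), (nisanMatrix F d k).rank := by
  calc 2 ^ d = ∑ k ∈ Finset.range (d + 1), d.choose k := (Nat.sum_range_choose d).symm
    _ ≤ ∑ k ∈ Finset.range (d + 1), (nisanMatrix F d k).rank := by
        apply Finset.sum_le_sum
        intro k hk
        exact nisan_rank_lb (Nat.lt_succ_iff.mp (Finset.mem_range.mp hk))
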